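/- Let V = (v_{ij}) be an n×n complex matrix, and for x ∈ {-1,1}^n define Rys_x(V) := x₁⋯x_n · ∏_{i=1}^n (v_{i1}x₁ + ⋯ + v_{in}x_n). Then |Rys_x(V)| ≤ ‖V‖^n for every x ∈ {-1,1}^n. -/

import Mathlib

/-- The ℓ²→ℓ² operator norm of a complex square matrix (its largest singular value). -/
noncomputable def opNorm {n : ℕ} (A : Matrix (Fin n) (Fin n) ℂ) : ℝ :=
  ‖Matrix.toEuclideanCLM (𝕜 := ℂ) A‖

/-- For every `x ∈ {-1,1}^n`,
`|Rys_x(V)| = |x₁⋯x_n ∏_i (∑_j v_{ij}x_j)| ≤ ‖V‖^n`. -/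
theorem rys_le_opNorm_pow (n : ℕ) (V : Matrix (Fin n) (Fin n) ℂ) (x : Fin n → ℂ)
    (hx : ∀ i, x i = 1 ∨ x i = -1) :
    ‖(∏ i, x i) * ∏ i, ∑ j, V i j * x j‖ ≤ opNorm V ^ n := by
  have hxabs : ∀ i, ‖x i‖ = 1 := by
    intro i; rcases hx i with h | h <;> simp [h]
  rcases Nat.eq_zero_or_pos n with hn | hn
  · subst hn; simp
  set a : Fin n → ℝ := fun i => ‖∑ j, V i j * x j‖ with ha
  have ha0 : ∀ i, 0 ≤ a i := fun i => norm_nonneg _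
  have hopn : 0 ≤ opNorm V := norm_nonneg _
  -- the vector in EuclideanSpace
  set y : EuclideanSpace ℂ (Fin n) := (WithLp.equiv 2 (Fin n → ℂ)).symm x with hy
  have hny : ‖y‖ = Real.sqrt n := by
    rw [EuclideanSpace.norm_eq]
    congr 1
    rw [Finset.sum_congr rfl (fun i _ => by
      show ‖x i‖ ^ 2 = 1
      rw [hxabs i, one_pow])]
    simp
  have hAy : Matrix.toEuclideanCLM (𝕜 := ℂ) V y =
      (WithLp.equiv 2 (Fin n → ℂ)).symm (V.mulVec x) := by
    rw [hy]; rfl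
  have hbound : ‖Matrix.toEuclideanCLM (𝕜 := ℂ) V y‖ ≤ opNorm V * Real.sqrt n := by
    rw [← hny]; exact (Matrix.toEuclideanCLM (𝕜 := ℂ) V).le_opNorm y
  have hsum : ∑ i, a i ^ 2 ≤ opNorm V ^ 2 * n := by
    have h1 : ‖Matrix.toEuclideanCLM (𝕜 := ℂ) V y‖ ^ 2 = ∑ i, a i ^ 2 := by
      rw [hAy, EuclideanSpace.norm_eq, Real.sq_sqrt (by positivity)]
      refine Finset.sum_congr rfl fun i _ => ?_
      simp [ha, Matrix.mulVec, dotProduct]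
    calc ∑ i, a i ^ 2 = ‖Matrix.toEuclideanCLM (𝕜 := ℂ) V y‖ ^ 2 := h1.symm
      _ ≤ (opNorm V * Real.sqrt n) ^ 2 :=
        pow_le_pow_left₀ (norm_nonneg _) hbound 2
      _ = opNorm V ^ 2 * n := by
        rw [mul_pow, Real.sq_sqrt (Nat.cast_nonneg n)]
  -- AM-GM
  have hamgm : ∏ i, (a i ^ 2) ^ ((n : ℝ)⁻¹) ≤ (∑ i, a i ^ 2) / n := by
    have := Real.geom_mean_le_arith_mean_weighted Finset.univ
      (fun _ : Fin n => (n : ℝ)⁻¹) (fun i => a i ^ 2)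
      (fun i _ => by positivity)
      (by simp [Finset.card_univ]; field_simp)
      (fun i _ => by positivity)
    calc ∏ i, (a i ^ 2) ^ ((n : ℝ)⁻¹) ≤ ∑ i, (n : ℝ)⁻¹ * a i ^ 2 := this
      _ = (∑ i, a i ^ 2) / n := by rw [← Finset.mul_sum]; ring
  have hdiv : (∑ i, a i ^ 2) / n ≤ opNorm V ^ 2 := by
    rw [div_le_iff₀ (by exact_mod_cast hn)]
    linarith [hsum]
  have hprodsq : (∏ i, a i) ^ 2 ≤ (opNorm V ^ n) ^ 2 := by
    have h2 : ∏ i, (a i ^ 2) ^ ((n : ℝ)⁻¹) = ((∏ i, a i) ^ 2) ^ ((n : ℝ)⁻¹) := by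
      rw [Real.finset_prod_rpow _ _ (fun i _ => by positivity), Finset.prod_pow]
    have h3 : ((∏ i, a i) ^ 2) ^ ((n : ℝ)⁻¹) ≤ opNorm V ^ 2 := by
      rw [← h2]; exact hamgm.trans hdiv
    have hP : (0 : ℝ) ≤ (∏ i, a i) ^ 2 := by positivity
    calc (∏ i, a i) ^ 2
        = (((∏ i, a i) ^ 2) ^ ((n : ℝ)⁻¹)) ^ (n : ℝ) := by
          rw [← Real.rpow_mul hP, inv_mul_cancel₀ (by exact_mod_cast hn.ne'),
            Real.rpow_one]
      _ ≤ (opNorm V ^ 2) ^ (n : ℝ) :=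
          Real.rpow_le_rpow (by positivity) h3 (by positivity)
      _ = (opNorm V ^ n) ^ 2 := by
          rw [Real.rpow_natCast, ← pow_mul, mul_comm 2 n, pow_mul]
  have hprod : ∏ i, a i ≤ opNorm V ^ n :=
    (pow_le_pow_iff_left₀ (Finset.prod_nonneg fun i _ => ha0 i)
      (by positivity) two_ne_zero).mp hprodsq
  calc ‖(∏ i, x i) * ∏ i, ∑ j, V i j * x j‖
      = ∏ i, a i := by
        rw [norm_mul, norm_prod, norm_prod]
        simp [hxabs, ha]
    _ ≤ opNorm V ^ n := hprod
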